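/- Let P be a Köthe set on a set I with P ≺ P², and for p ∈ P define p̄ by p̄_i = min{p_i, 1}, and let P̄ = { p̄ : p ∈ P }. Then for every a ∈ λ(P) and x ∈ λ(P̄), the pointwise product a·x = (a_i x_i)_{i∈I} belongs to λ(P̄); more precisely, for every p ∈ P there exist q ∈ P and C > 0 such that ∑_{i∈I} |a_i x_i| p̄_i ≤ C (∑_{i∈I} |a_i| q_i)(∑_{i∈I} |x_i| q̄_i) for all a ∈ λ(P) and x ∈ λ(P̄). -/

import Mathlib

/-- If `P ≺ P²` and `p̄ᵢ = min{pᵢ, 1}`, then pointwise products of elements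
of `λ(P)` with elements of `λ(P̄)` lie in `λ(P̄)`, with the quantitative estimate
`∑ᵢ |aᵢxᵢ| p̄ᵢ ≤ C (∑ᵢ |aᵢ| qᵢ)(∑ᵢ |xᵢ| q̄ᵢ)`. -/
theorem kothe_barP_module {I : Type*} (P : Set (I → ℝ))
    (hP0 : ∀ p ∈ P, ∀ i, 0 ≤ p i)
    (hP1 : ∀ i, ∃ p ∈ P, 0 < p i)
    (hP2 : ∀ p ∈ P, ∀ q ∈ P, ∃ r ∈ P, ∀ i, max (p i) (q i) ≤ r i)
    (hPP2 : ∀ p ∈ P, ∃ q ∈ P, ∃ C : ℝ, 0 < C ∧ ∀ i, p i ≤ C * (q i) ^ 2) :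
    ∀ p ∈ P, ∃ q ∈ P, ∃ C : ℝ, 0 < C ∧
      ∀ a x : I → ℂ,
        (∀ p' ∈ P, Summable fun i => ‖a i‖ * p' i) →
        (∀ p' ∈ P, Summable fun i => ‖x i‖ * min (p' i) 1) →
        (Summable fun i => ‖a i * x i‖ * min (p i) 1) ∧
        (∑' i, ‖a i * x i‖ * min (p i) 1) ≤
          C * (∑' i, ‖a i‖ * q i) * (∑' i, ‖x i‖ * min (q i) 1) := by
  intro p hp
  obtain ⟨q, hq, C, hC, hCq⟩ := hPP2 p hp
  refine ⟨q, hq, max C 1, lt_of_lt_of_le one_pos (le_max_right _ _), ?_⟩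
  intro a x ha hx
  have hqa := ha q hq
  have hqx := hx q hq
  -- key pointwise estimate on weights
  have key : ∀ i, min (p i) 1 ≤ max C 1 * (q i * min (q i) 1) := by
    intro i
    have hq0 := hP0 q hq i
    rcases le_total (q i) 1 with h | h
    · have : min (q i) 1 = q i := min_eq_left h
      rw [this]
      calc min (p i) 1 ≤ p i := min_le_left _ _
        _ ≤ C * (q i) ^ 2 := hCq i
        _ ≤ max C 1 * (q i * q i) := by
            rw [sq]
            exact mul_le_mul_of_nonneg_right (le_max_left _ _) (mul_nonneg hq0 hq0)
    · have : min (q i) 1 = 1 := min_eq_right h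
      rw [this]
      calc min (p i) 1 ≤ 1 := min_le_right _ _
        _ ≤ max C 1 * (q i * 1) := by
            rw [mul_one]
            have h1 : (1:ℝ) ≤ max C 1 := le_max_right _ _
            nlinarith
  set S := ∑' i, ‖a i‖ * q i with hS
  have hS0 : 0 ≤ S := tsum_nonneg fun i =>
    mul_nonneg (norm_nonneg _) (hP0 q hq i)
  have hterm : ∀ i, ‖a i‖ * q i ≤ S := fun i =>
    Summable.le_tsum hqa i fun j _ => mul_nonneg (norm_nonneg _) (hP0 q hq j)
  have bound : ∀ i, ‖a i * x i‖ * min (p i) 1 ≤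
      max C 1 * S * (‖x i‖ * min (q i) 1) := by
    intro i
    rw [norm_mul]
    have h1 : ‖a i‖ * ‖x i‖ * min (p i) 1 ≤
        ‖a i‖ * ‖x i‖ * (max C 1 * (q i * min (q i) 1)) := by
      apply mul_le_mul_of_nonneg_left (key i)
        (mul_nonneg (norm_nonneg _) (norm_nonneg _))
    refine h1.trans ?_
    have h2 : ‖a i‖ * ‖x i‖ * (max C 1 * (q i * min (q i) 1))
        = max C 1 * ((‖a i‖ * q i) * (‖x i‖ * min (q i) 1)) := by
      ring
    rw [h2, mul_assoc (max C 1) S]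
    apply mul_le_mul_of_nonneg_left _ (le_trans zero_le_one (le_max_right _ _))
    apply mul_le_mul_of_nonneg_right (hterm i)
    exact mul_nonneg (norm_nonneg _) (le_min (hP0 q hq i) zero_le_one)
  have hsum : Summable fun i => max C 1 * S * (‖x i‖ * min (q i) 1) :=
    hqx.mul_left _
  have hnn : ∀ i, 0 ≤ ‖a i * x i‖ * min (p i) 1 := fun i =>
    mul_nonneg (norm_nonneg _) (le_min (hP0 p hp i) zero_le_one)
  have hsum' : Summable fun i => ‖a i * x i‖ * min (p i) 1 :=
    Summable.of_nonneg_of_le hnn bound hsum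
  refine ⟨hsum', ?_⟩
  calc (∑' i, ‖a i * x i‖ * min (p i) 1)
      ≤ ∑' i, max C 1 * S * (‖x i‖ * min (q i) 1) :=
        Summable.tsum_le_tsum bound hsum' hsum
    _ = max C 1 * S * ∑' i, ‖x i‖ * min (q i) 1 := tsum_mul_left
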